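/- arXiv:0901.0247 — 3 statements merged into one kernel-verified Lean document; each statement's English description precedes it below -/
import Mathlib

section
/- Let m, n be non-negative integers, let τ be an (m|n)-hook partition (i.e. τ_{m+1} ≤ n), and set ν_k := τ_{m+k} for k ≥ 1. Then −Σ_{i=1}^{m} τ_i(τ_i − 2(i−1)) + Σ_{j=1}^{n} ν'_j(ν'_j + 2(m−j)) = − Σ_{i≥1} τ_i(τ_i − 2(i−1)). -/
/-- A partition: a weakly decreasing, eventually zero sequence of
non-negative integers. Here `l i` denotes the part `λ_{i+1}` (0-indexed). -/
def IsPartition (l : ℕ → ℕ) : Prop :=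
  Antitone l ∧ ∃ N, ∀ i, N ≤ i → l i = 0

/-- The conjugate partition: `conj l j` is `λ'_{j+1} = #{ i ≥ 1 : λ_i ≥ j+1 }`
(0-indexed). -/
noncomputable def conj (l : ℕ → ℕ) (j : ℕ) : ℕ :=
  Set.ncard {i : ℕ | j + 1 ≤ l i}

private lemma row_zero (a : ℕ) : ∑ j ∈ Finset.range a, ((a : ℤ) - 2 * (j : ℤ) - 1) = 0 := by
  induction a with
  | zero => simp
  | succ k ih =>
    rw [Finset.sum_range_succ]
    have h : ∀ j ∈ Finset.range k, (((k : ℕ) + 1 : ℕ) : ℤ) - 2 * (j : ℤ) - 1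
        = ((k : ℤ) - 2 * (j : ℤ) - 1) + 1 := by
      intro j _; push_cast; ring
    rw [Finset.sum_congr rfl h, Finset.sum_add_distrib, ih, Finset.sum_const,
      Finset.card_range, nsmul_eq_mul]
    push_cast; ring

private lemma row_sum (a : ℕ) (t : ℤ) :
    ∑ j ∈ Finset.range a, (t + 2 * (j : ℤ)) = (a : ℤ) * (t + (a : ℤ) - 1) := by
  have h0 := row_zero a
  have h : ∀ j ∈ Finset.range a, t + 2 * (j : ℤ)
      = (t + (a : ℤ) - 1) - ((a : ℤ) - 2 * (j : ℤ) - 1) := by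
    intro j _; ring
  rw [Finset.sum_congr rfl h, Finset.sum_sub_distrib, h0, Finset.sum_const,
    Finset.card_range, sub_zero, nsmul_eq_mul]

/-- For τ an (m|n)-hook partition and ν_k := τ_{m+k}:
−Σ_{i=1}^{m} τ_i(τ_i − 2(i−1)) + Σ_{j=1}^{n} ν'_j(ν'_j + 2(m−j))
  = − Σ_{i≥1} τ_i(τ_i − 2(i−1)). -/
theorem hook_partition_identity (m n : ℕ) (l : ℕ → ℕ) (hl : IsPartition l)
    (hhook : l m ≤ n) :
    - ∑ i ∈ Finset.range m, (l i : ℤ) * ((l i : ℤ) - 2 * (i : ℤ)) +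
      ∑ j ∈ Finset.range n,
        (conj (fun k => l (m + k)) j : ℤ) *
          ((conj (fun k => l (m + k)) j : ℤ) + 2 * ((m : ℤ) - ((j : ℤ) + 1))) =
      - ∑ᶠ i : ℕ, (l i : ℤ) * ((l i : ℤ) - 2 * (i : ℤ)) := by
  obtain ⟨hmono, N, hN⟩ := hl
  set ν : ℕ → ℕ := fun k => l (m + k) with hν
  have hν0 : ∀ k, N ≤ k → ν k = 0 := fun k hk => hN _ (by omega)
  have hνanti : Antitone ν := fun a b hab => hmono (by omega)
  have hνn : ∀ k, ν k ≤ n := fun k => le_trans (hmono (Nat.le_add_right m k)) hhook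
  -- the conjugate counts an initial segment
  have hfilter : ∀ j, (Finset.range N).filter (fun i => j + 1 ≤ ν i)
      = Finset.range (conj ν j) := by
    intro j
    have hset : {i : ℕ | j + 1 ≤ ν i}
        = ((Finset.range N).filter (fun i => j + 1 ≤ ν i) : Set ℕ) := by
      ext i
      simp only [Set.mem_setOf_eq, Finset.coe_filter, Finset.mem_range, Set.mem_setOf_eq]
      constructor
      · intro h
        refine ⟨?_, h⟩
        by_contra hc
        have := hν0 i (by omega)
        omega
      · exact fun h => h.2
    have hcard : conj ν j = ((Finset.range N).filter (fun i => j + 1 ≤ ν i)).card := by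
      rw [conj, hset, Set.ncard_coe_finset]
    ext i
    simp only [Finset.mem_filter, Finset.mem_range]
    constructor
    · rintro ⟨hiN, hji⟩
      have hsub : Finset.range (i + 1) ⊆ (Finset.range N).filter (fun i => j + 1 ≤ ν i) := by
        intro i' hi'
        simp only [Finset.mem_range] at hi'
        simp only [Finset.mem_filter, Finset.mem_range]
        exact ⟨by omega, le_trans hji (hνanti (by omega))⟩
      have h2 := Finset.card_le_card hsub
      rw [Finset.card_range] at h2
      omega
    · intro hi
      by_contra hc
      push_neg at hc
      have hνi : ν i < j + 1 := by
        by_cases hiN : i < N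
        · have := hc hiN; omega
        · have := hν0 i (by omega); omega
      have hsub : (Finset.range N).filter (fun i => j + 1 ≤ ν i) ⊆ Finset.range i := by
        intro i' hi'
        simp only [Finset.mem_filter, Finset.mem_range] at hi'
        simp only [Finset.mem_range]
        by_contra hc'
        have := hνanti (show i ≤ i' by omega)
        omega
      have h2 := Finset.card_le_card hsub
      rw [Finset.card_range] at h2
      omega
  -- swapping rows and columns of the Young diagram of ν
  have hswap : ∀ w : ℕ → ℕ → ℤ,
      ∑ i ∈ Finset.range N, ∑ j ∈ Finset.range (ν i), w i j
        = ∑ j ∈ Finset.range n, ∑ i ∈ Finset.range (conj ν j), w i j := by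
    intro w
    refine Finset.sum_comm' ?_
    intro i j
    have h1 := hfilter j
    constructor
    · rintro ⟨hi, hj⟩
      simp only [Finset.mem_range] at hi hj ⊢
      have h3 : i ∈ Finset.range (conj ν j) := by
        rw [← h1]; simp only [Finset.mem_filter, Finset.mem_range]; exact ⟨hi, hj⟩
      simp only [Finset.mem_range] at h3
      exact ⟨h3, lt_of_lt_of_le hj (hνn i)⟩
    · rintro ⟨hi, hj⟩
      have h3 : i ∈ (Finset.range N).filter (fun i => j + 1 ≤ ν i) := by rw [h1]; exact hi
      simp only [Finset.mem_filter, Finset.mem_range] at h3 ⊢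
      exact ⟨h3.1, h3.2⟩
  -- rewrite the finsum as a finite sum
  have hsupp : (Function.support fun i => (l i : ℤ) * ((l i : ℤ) - 2 * (i : ℤ)))
      ⊆ (Finset.range (m + N) : Set ℕ) := by
    intro i hi
    simp only [Function.mem_support] at hi
    simp only [Finset.coe_range, Set.mem_Iio]
    by_contra hc
    have : l i = 0 := hN i (by omega)
    simp [this] at hi
  rw [finsum_eq_sum_of_support_subset _ hsupp, Finset.sum_range_add]
  -- the key identity on ν
  have key : ∑ j ∈ Finset.range n,
      (conj ν j : ℤ) * ((conj ν j : ℤ) + 2 * ((m : ℤ) - ((j : ℤ) + 1)))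
      = - ∑ k ∈ Finset.range N, (ν k : ℤ) * ((ν k : ℤ) - 2 * ((m + k : ℕ) : ℤ)) := by
    calc ∑ j ∈ Finset.range n,
          (conj ν j : ℤ) * ((conj ν j : ℤ) + 2 * ((m : ℤ) - ((j : ℤ) + 1)))
        = ∑ j ∈ Finset.range n, ∑ i ∈ Finset.range (conj ν j),
            ((2 * (m : ℤ) - 2 * (j : ℤ) - 1) + 2 * (i : ℤ)) := by
          refine Finset.sum_congr rfl fun j _ => ?_
          rw [row_sum]; ring
      _ = ∑ j ∈ Finset.range n, ∑ i ∈ Finset.range (conj ν j),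
            (-((-2 * (m : ℤ) - 2 * (i : ℤ) + 1) + 2 * (j : ℤ))) := by
          refine Finset.sum_congr rfl fun j _ => Finset.sum_congr rfl fun i _ => by ring
      _ = - ∑ j ∈ Finset.range n, ∑ i ∈ Finset.range (conj ν j),
            ((-2 * (m : ℤ) - 2 * (i : ℤ) + 1) + 2 * (j : ℤ)) := by
          rw [← Finset.sum_neg_distrib]
          refine Finset.sum_congr rfl fun j _ => ?_
          rw [← Finset.sum_neg_distrib]
      _ = - ∑ k ∈ Finset.range N, ∑ j ∈ Finset.range (ν k),
            ((-2 * (m : ℤ) - 2 * (k : ℤ) + 1) + 2 * (j : ℤ)) := by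
          rw [hswap (fun i j => (-2 * (m : ℤ) - 2 * (i : ℤ) + 1) + 2 * (j : ℤ))]
      _ = - ∑ k ∈ Finset.range N, (ν k : ℤ) * ((ν k : ℤ) - 2 * ((m + k : ℕ) : ℤ)) := by
          congr 1
          refine Finset.sum_congr rfl fun k _ => ?_
          rw [row_sum]; push_cast; ring
  rw [key]
  push_cast
  ring
end

section
/- Let p, q be non-negative integers and let ζ = (ζ_0, ζ_1, ζ_2, …) be a weakly decreasing, eventually zero sequence of non-negative integers (indexed from 0) with ζ_q ≤ p. Set χ_k := ζ_{q+k−1} for k ≥ 1. Then Σ_{j=0}^{q−1} ζ_j(ζ_j − 2j) − Σ_{k=1}^{p} χ'_k(χ'_k + 2(q−k)) = Σ_{j≥0} ζ_j(ζ_j − 2j). -/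
private lemma sum_lin (c : ℕ) (a : ℤ) :
    ∑ i ∈ Finset.range c, (2 * (i : ℤ) + a) = c * (c + a - 1) := by
  induction c with
  | zero => simp
  | succ n ih => rw [Finset.sum_range_succ, ih]; push_cast; ring

private lemma sum_lin2 (m : ℕ) (b : ℤ) :
    ∑ k ∈ Finset.range m, (b - 2 * (k : ℤ) - 1) = m * (b - m) := by
  induction m with
  | zero => simp
  | succ n ih => rw [Finset.sum_range_succ, ih]; push_cast; ring

/-- For ζ = (ζ_0, ζ_1, …) weakly decreasing eventually zero with ζ_q ≤ p,
and χ_k := ζ_{q+k−1}: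
Σ_{j=0}^{q−1} ζ_j(ζ_j − 2j) − Σ_{k=1}^{p} χ'_k(χ'_k + 2(q−k))
  = Σ_{j≥0} ζ_j(ζ_j − 2j). -/
theorem negative_direction_identity (p q : ℕ) (zeta : ℕ → ℕ)
    (hz : IsPartition zeta) (hq : zeta q ≤ p) :
    ∑ j ∈ Finset.range q, (zeta j : ℤ) * ((zeta j : ℤ) - 2 * (j : ℤ)) -
      ∑ k ∈ Finset.range p,
        (conj (fun i => zeta (q + i)) k : ℤ) *
          ((conj (fun i => zeta (q + i)) k : ℤ) + 2 * ((q : ℤ) - ((k : ℤ) + 1))) =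
      ∑ᶠ j : ℕ, (zeta j : ℤ) * ((zeta j : ℤ) - 2 * (j : ℤ)) := by
  obtain ⟨hanti, N, hN⟩ := hz
  set χ : ℕ → ℕ := fun i => zeta (q + i) with hχ
  have hχanti : Antitone χ := fun a b hab => hanti (by omega)
  have hχN : ∀ i, N ≤ i → χ i = 0 := fun i hi => hN _ (by omega)
  have hχp : ∀ i, χ i ≤ p := by
    intro i
    have : χ i ≤ χ 0 := hχanti (Nat.zero_le i)
    simpa [hχ] using this.trans hq
  -- evaluate conjugate
  have hconj : ∀ k, ∃ c, c ≤ N ∧ conj χ k = c ∧ ∀ i, (k + 1 ≤ χ i ↔ i < c) := by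
    intro k
    have hex : ∃ i, χ i ≤ k := ⟨N, by rw [hχN N le_rfl]; omega⟩
    set c := Nat.find hex with hc
    have hcN : c ≤ N := Nat.find_le (by rw [hχN N le_rfl]; omega)
    have hiff : ∀ i, (k + 1 ≤ χ i ↔ i < c) := by
      intro i
      constructor
      · intro h
        by_contra hcon
        push_neg at hcon
        have h1 : χ i ≤ χ c := hχanti hcon
        have h2 : χ c ≤ k := Nat.find_spec hex
        omega
      · intro h
        have : ¬ χ i ≤ k := Nat.find_min hex h
        omega
    refine ⟨c, hcN, ?_, hiff⟩
    have hs : {i : ℕ | k + 1 ≤ χ i} = ↑(Finset.range c) := by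
      ext i; simp only [Set.mem_setOf_eq, Finset.coe_range, Set.mem_Iio]; exact hiff i
    rw [conj, hs, Set.ncard_coe_finset, Finset.card_range]
  -- key double counting
  have key : ∑ k ∈ Finset.range p,
      (conj χ k : ℤ) * ((conj χ k : ℤ) + 2 * ((q : ℤ) - ((k : ℤ) + 1)))
      = ∑ i ∈ Finset.range N, (χ i : ℤ) * (2 * ((q : ℤ) + i) - (χ i : ℤ)) := by
    have lhs : ∀ k ∈ Finset.range p,
        (conj χ k : ℤ) * ((conj χ k : ℤ) + 2 * ((q : ℤ) - ((k : ℤ) + 1)))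
        = ∑ i ∈ Finset.range N,
            (if k < χ i then (2 * ((q : ℤ) + i) - 2 * k - 1) else 0) := by
      intro k _
      obtain ⟨c, hcN, hc, hiff⟩ := hconj k
      have hfil : (Finset.range N).filter (fun i => k < χ i) = Finset.range c := by
        ext i
        simp only [Finset.mem_filter, Finset.mem_range]
        constructor
        · rintro ⟨_, h⟩; exact (hiff i).1 h
        · intro h; exact ⟨lt_of_lt_of_le h hcN, (hiff i).2 h⟩
      rw [← Finset.sum_filter, hfil]
      have : ∀ i ∈ Finset.range c, (2 * ((q : ℤ) + i) - 2 * k - 1)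
          = 2 * (i : ℤ) + (2 * q - 2 * k - 1) := by intro i _; ring
      rw [Finset.sum_congr rfl this, sum_lin, hc]
      ring
    have rhs : ∀ i ∈ Finset.range N,
        (χ i : ℤ) * (2 * ((q : ℤ) + i) - (χ i : ℤ))
        = ∑ k ∈ Finset.range p,
            (if k < χ i then (2 * ((q : ℤ) + i) - 2 * k - 1) else 0) := by
      intro i _
      have hfil : (Finset.range p).filter (fun k => k < χ i) = Finset.range (χ i) := by
        ext k
        simp only [Finset.mem_filter, Finset.mem_range]
        have := hχp i
        omega
      rw [← Finset.sum_filter, hfil, sum_lin2]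
    rw [Finset.sum_congr rfl lhs, Finset.sum_congr rfl rhs, Finset.sum_comm]
  -- evaluate the finsum
  have hfin : ∑ᶠ j : ℕ, (zeta j : ℤ) * ((zeta j : ℤ) - 2 * (j : ℤ))
      = ∑ j ∈ Finset.range (q + N), (zeta j : ℤ) * ((zeta j : ℤ) - 2 * (j : ℤ)) := by
    apply finsum_eq_sum_of_support_subset
    intro j hj
    simp only [Function.mem_support] at hj
    simp only [Finset.coe_range, Set.mem_Iio]
    by_contra hcon
    push_neg at hcon
    rw [hN j (by omega)] at hj
    simp at hj
  rw [hfin, Finset.sum_range_add]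
  have hrw : ∀ i ∈ Finset.range N,
      ((zeta (q + i) : ℤ) * ((zeta (q + i) : ℤ) - 2 * ((q + i : ℕ) : ℤ)))
      = -((χ i : ℤ) * (2 * ((q : ℤ) + i) - (χ i : ℤ))) := by
    intro i _
    simp only [hχ]
    push_cast
    ring
  rw [Finset.sum_congr rfl hrw, Finset.sum_neg_distrib]
  rw [key]
  ring
end

section
/- Let m, n, p, q be non-negative integers. Let η be an (n|m)-hook partition (η_{n+1} ≤ m), set τ := η' and ν_k := τ_{m+k} for k ≥ 1. Let ζ = (ζ_0, ζ_1, …) be a weakly decreasing, eventually zero sequence of non-negative integers with ζ_q ≤ p, and set χ_k := ζ_{q+k−1} for k ≥ 1. Then −Σ_{i=1}^{m} τ_i(τ_i − 2(i−1)) + Σ_{j=1}^{n} ν'_j(ν'_j + 2(m−j)) + Σ_{j=0}^{q−1} ζ_j(ζ_j − 2j) − Σ_{k=1}^{p} χ'_k(χ'_k + 2(q−k)) = Σ_{i≥1} η_i(η_i − 2i) + Σ_{j≥0} ζ_j(ζ_j − 2j). -/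
/-- downward closed finset of ℕ is a range -/
lemma down_eq_range (S : Finset ℕ) (h : ∀ i j, i ≤ j → j ∈ S → i ∈ S) :
    S = Finset.range S.card := by
  have hsub : Finset.range S.card ⊆ S := by
    intro i hi
    rw [Finset.mem_range] at hi
    by_contra hiS
    have : S ⊆ Finset.range i := by
      intro k hk
      rw [Finset.mem_range]
      by_contra hk'
      exact hiS (h i k (Nat.le_of_not_lt hk') hk)
    have := Finset.card_le_card this
    simp at this
    omega
  exact (Finset.eq_of_subset_of_card_le hsub (by simp)).symm

lemma conj_eq (μ : ℕ → ℕ) (N : ℕ) (hN : ∀ i, N ≤ i → μ i = 0) (j : ℕ) :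
    conj μ j = ((Finset.range N).filter (fun i => j < μ i)).card := by
  have : {i : ℕ | j + 1 ≤ μ i} = ↑((Finset.range N).filter (fun i => j < μ i)) := by
    ext i
    simp only [Set.mem_setOf_eq, Finset.coe_filter, Finset.mem_range, Set.mem_setOf_eq]
    constructor
    · intro hi
      refine ⟨?_, by omega⟩
      by_contra hiN
      have := hN i (Nat.le_of_not_lt hiN)
      omega
    · intro h; omega
  rw [conj, this, Set.ncard_coe_finset]

lemma conj_le (μ : ℕ → ℕ) (N : ℕ) (hN : ∀ i, N ≤ i → μ i = 0) (j : ℕ) :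
    conj μ j ≤ N := by
  rw [conj_eq μ N hN]
  exact le_trans (Finset.card_filter_le _ _) (by simp)

lemma lt_conj_iff (μ : ℕ → ℕ) (hμ : Antitone μ) (N : ℕ) (hN : ∀ i, N ≤ i → μ i = 0)
    (i j : ℕ) : i < conj μ j ↔ j + 1 ≤ μ i := by
  rw [conj_eq μ N hN]
  set S := (Finset.range N).filter (fun i => j < μ i) with hS
  have hdown : ∀ a b, a ≤ b → b ∈ S → a ∈ S := by
    intro a b hab hb
    simp only [hS, Finset.mem_filter, Finset.mem_range] at hb ⊢
    have := hμ hab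
    constructor <;> omega
  have hre := down_eq_range S hdown
  constructor
  · intro h
    have : i ∈ S := by rw [hre]; exact Finset.mem_range.mpr h
    simp only [hS, Finset.mem_filter] at this
    omega
  · intro h
    have hiN : i < N := by
      by_contra hiN
      have := hN i (Nat.le_of_not_lt hiN); omega
    have : i ∈ S := by
      simp only [hS, Finset.mem_filter, Finset.mem_range]
      exact ⟨hiN, by omega⟩
    rw [hre] at this
    exact Finset.mem_range.mp this

lemma conj_zero (μ : ℕ → ℕ) (hμ : Antitone μ) (j : ℕ) (h : μ 0 ≤ j) : conj μ j = 0 := by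
  have : {i : ℕ | j + 1 ≤ μ i} = ∅ := by
    ext i
    simp only [Set.mem_setOf_eq, Set.mem_empty_iff_false, iff_false]
    have := hμ (Nat.zero_le i)
    omega
  rw [conj, this, Set.ncard_empty]

lemma conj_conj (μ : ℕ → ℕ) (hμ : Antitone μ) (N : ℕ) (hN : ∀ i, N ≤ i → μ i = 0)
    (j : ℕ) : conj (conj μ) j = μ j := by
  have : {i : ℕ | j + 1 ≤ conj μ i} = ↑(Finset.range (μ j)) := by
    ext i
    simp only [Set.mem_setOf_eq, Finset.coe_range, Set.mem_Iio]
    rw [← Nat.lt_iff_add_one_le, lt_conj_iff μ hμ N hN j i, Nat.lt_iff_add_one_le]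
  rw [conj, this, Set.ncard_coe_finset, Finset.card_range]

lemma conj_antitone (μ : ℕ → ℕ) (N : ℕ) (hN : ∀ i, N ≤ i → μ i = 0) :
    Antitone (conj μ) := by
  intro j j' h
  rw [conj_eq μ N hN, conj_eq μ N hN]
  apply Finset.card_le_card
  intro i hi
  simp only [Finset.mem_filter, Finset.mem_range] at *
  omega

lemma filter_lt_range (M t : ℕ) (h : t ≤ M) :
    (Finset.range M).filter (fun j => j < t) = Finset.range t := by
  ext j; simp only [Finset.mem_filter, Finset.mem_range]; omega

lemma sum_odd (t : ℕ) : ∑ j ∈ Finset.range t, (2 * (j : ℤ) + 1) = (t : ℤ) ^ 2 := by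
  induction t with
  | zero => simp
  | succ t ih => rw [Finset.sum_range_succ, ih]; push_cast; ring

/-- double counting over the Young diagram with weight w -/
lemma swap_sum (μ : ℕ → ℕ) (N M : ℕ) (w : ℕ → ℕ → ℤ) :
    ∑ i ∈ Finset.range N, ∑ j ∈ Finset.range M, (if j < μ i then w i j else 0)
      = ∑ j ∈ Finset.range M, ∑ i ∈ Finset.range N, (if j < μ i then w i j else 0) :=
  Finset.sum_comm

lemma claim1 (μ : ℕ → ℕ) (hμ : Antitone μ) (N M : ℕ) (hN : ∀ i, N ≤ i → μ i = 0)
    (hM : μ 0 ≤ M) :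
    ∑ i ∈ Finset.range N, (μ i : ℤ) = ∑ j ∈ Finset.range M, (conj μ j : ℤ) := by
  have h1 : ∀ i ∈ Finset.range N, (μ i : ℤ)
      = ∑ j ∈ Finset.range M, (if j < μ i then (1:ℤ) else 0) := by
    intro i _
    rw [← Finset.sum_filter, filter_lt_range M (μ i) (le_trans (hμ (Nat.zero_le i)) hM)]
    simp
  have h2 : ∀ j ∈ Finset.range M, (conj μ j : ℤ)
      = ∑ i ∈ Finset.range N, (if j < μ i then (1:ℤ) else 0) := by
    intro j _
    rw [← Finset.sum_filter]
    simp only [Finset.sum_const, smul_eq_mul, mul_one]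
    rw [conj_eq μ N hN j]
    simp
  rw [Finset.sum_congr rfl h1, Finset.sum_congr rfl h2, swap_sum]

lemma claim2 (μ : ℕ → ℕ) (hμ : Antitone μ) (N M : ℕ) (hN : ∀ i, N ≤ i → μ i = 0)
    (hM : μ 0 ≤ M) :
    ∑ i ∈ Finset.range N, (μ i : ℤ) ^ 2
      = ∑ j ∈ Finset.range M, (2 * (j : ℤ) + 1) * (conj μ j : ℤ) := by
  have h1 : ∀ i ∈ Finset.range N, (μ i : ℤ) ^ 2
      = ∑ j ∈ Finset.range M, (if j < μ i then (2 * (j:ℤ) + 1) else 0) := by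
    intro i _
    rw [← Finset.sum_filter, filter_lt_range M (μ i) (le_trans (hμ (Nat.zero_le i)) hM),
      sum_odd]
  have h2 : ∀ j ∈ Finset.range M, (2 * (j:ℤ) + 1) * (conj μ j : ℤ)
      = ∑ i ∈ Finset.range N, (if j < μ i then (2 * (j:ℤ) + 1) else 0) := by
    intro j _
    rw [← Finset.sum_filter]
    simp only [Finset.sum_const, smul_eq_mul]
    rw [conj_eq μ N hN j]
    ring
  rw [Finset.sum_congr rfl h1, Finset.sum_congr rfl h2, swap_sum]

lemma claim3 (μ : ℕ → ℕ) (hμ : Antitone μ) (N M : ℕ) (hN : ∀ i, N ≤ i → μ i = 0)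
    (hM : μ 0 ≤ M) :
    ∑ j ∈ Finset.range M, (conj μ j : ℤ) ^ 2
      = ∑ i ∈ Finset.range N, (2 * (i : ℤ) + 1) * (μ i : ℤ) := by
  have key : ∀ i j, (j < μ i) ↔ (i < conj μ j) := by
    intro i j
    rw [lt_conj_iff μ hμ N hN i j]; omega
  have h1 : ∀ j ∈ Finset.range M, (conj μ j : ℤ) ^ 2
      = ∑ i ∈ Finset.range N, (if j < μ i then (2 * (i:ℤ) + 1) else 0) := by
    intro j _
    have : ∀ i, (j < μ i) = (i < conj μ j) := fun i => propext (key i j)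
    simp only [this]
    rw [← Finset.sum_filter, filter_lt_range N (conj μ j) (conj_le μ N hN j), sum_odd]
  have h2 : ∀ i ∈ Finset.range N, (2 * (i:ℤ) + 1) * (μ i : ℤ)
      = ∑ j ∈ Finset.range M, (if j < μ i then (2 * (i:ℤ) + 1) else 0) := by
    intro i _
    rw [← Finset.sum_filter, filter_lt_range M (μ i) (le_trans (hμ (Nat.zero_le i)) hM)]
    simp only [Finset.sum_const, smul_eq_mul, Finset.card_range]
    ring
  rw [Finset.sum_congr rfl h1, Finset.sum_congr rfl h2, ← swap_sum]

/-- The core identity. -/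
lemma core (μ : ℕ → ℕ) (hμ : Antitone μ) (N M : ℕ) (hN : ∀ i, N ≤ i → μ i = 0)
    (hM : μ 0 ≤ M) (a : ℕ) :
    ∑ k ∈ Finset.range N, (μ k : ℤ) * ((μ k : ℤ) - 2 * ((a : ℤ) + k))
      + ∑ j ∈ Finset.range M,
          (conj μ j : ℤ) * ((conj μ j : ℤ) + 2 * ((a : ℤ) - ((j : ℤ) + 1))) = 0 := by
  have h1 := claim1 μ hμ N M hN hM
  have h2 := claim2 μ hμ N M hN hM
  have h3 := claim3 μ hμ N M hN hM
  have eA : ∑ k ∈ Finset.range N, (μ k : ℤ) * ((μ k : ℤ) - 2 * ((a : ℤ) + k))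
      = ∑ k ∈ Finset.range N, ((μ k : ℤ) ^ 2 - (2 * (k:ℤ) + 1) * (μ k : ℤ)
          + ((μ k : ℤ) - 2 * (a:ℤ) * (μ k : ℤ))) :=
    Finset.sum_congr rfl fun i _ => by ring
  have eB : ∑ j ∈ Finset.range M,
        (conj μ j : ℤ) * ((conj μ j : ℤ) + 2 * ((a : ℤ) - ((j : ℤ) + 1)))
      = ∑ j ∈ Finset.range M, ((conj μ j : ℤ) ^ 2 - (2 * (j:ℤ) + 1) * (conj μ j : ℤ)
          + (2 * (a:ℤ) * (conj μ j : ℤ) - (conj μ j : ℤ))) :=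
    Finset.sum_congr rfl fun j _ => by ring
  rw [eA, eB]
  simp only [Finset.sum_add_distrib, Finset.sum_sub_distrib, ← Finset.mul_sum]
  linear_combination h2 + h3 + (1 - 2 * (a : ℤ)) * h1

lemma sum_range_add' (f : ℕ → ℤ) (a b : ℕ) :
    ∑ i ∈ Finset.range (a + b), f i
      = ∑ i ∈ Finset.range a, f i + ∑ k ∈ Finset.range b, f (a + k) := by
  induction b with
  | zero => simp
  | succ b ih => rw [← Nat.add_assoc, Finset.sum_range_succ, Finset.sum_range_succ, ih]; ring

/-- Lemma 4.1 of the paper, in explicit combinatorial form.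
Let η be an (n|m)-hook partition, τ := η', ν_k := τ_{m+k};
let ζ be weakly decreasing eventually zero with ζ_q ≤ p, χ_k := ζ_{q+k−1}.
Then
−Σ_{i=1}^{m} τ_i(τ_i − 2(i−1)) + Σ_{j=1}^{n} ν'_j(ν'_j + 2(m−j))
 + Σ_{j=0}^{q−1} ζ_j(ζ_j − 2j) − Σ_{k=1}^{p} χ'_k(χ'_k + 2(q−k))
 = Σ_{i≥1} η_i(η_i − 2i) + Σ_{j≥0} ζ_j(ζ_j − 2j). -/
theorem casimir_comparison_glInfinity (m n p q : ℕ)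
    (eta : ℕ → ℕ) (heta : IsPartition eta) (hetahook : eta n ≤ m)
    (zeta : ℕ → ℕ) (hzeta : IsPartition zeta) (hzetahook : zeta q ≤ p) :
    - ∑ i ∈ Finset.range m,
        (conj eta i : ℤ) * ((conj eta i : ℤ) - 2 * (i : ℤ)) +
      ∑ j ∈ Finset.range n,
        (conj (fun k => conj eta (m + k)) j : ℤ) *
          ((conj (fun k => conj eta (m + k)) j : ℤ) + 2 * ((m : ℤ) - ((j : ℤ) + 1))) +
      ∑ j ∈ Finset.range q, (zeta j : ℤ) * ((zeta j : ℤ) - 2 * (j : ℤ)) -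
      ∑ k ∈ Finset.range p,
        (conj (fun i => zeta (q + i)) k : ℤ) *
          ((conj (fun i => zeta (q + i)) k : ℤ) + 2 * ((q : ℤ) - ((k : ℤ) + 1))) =
      (∑ᶠ i : ℕ, (eta i : ℤ) * ((eta i : ℤ) - 2 * ((i : ℤ) + 1))) +
      ∑ᶠ j : ℕ, (zeta j : ℤ) * ((zeta j : ℤ) - 2 * (j : ℤ)) := by
  obtain ⟨hetaA, Ne, hNe⟩ := heta
  obtain ⟨hzetaA, Nz, hNz⟩ := hzeta
  -- basic facts
  have hτzero : ∀ i, eta 0 ≤ i → conj eta i = 0 := fun i hi => conj_zero eta hetaA i hi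
  have hνanti : Antitone (fun k => conj eta (m + k)) := fun a b hab =>
    conj_antitone eta Ne hNe (by omega)
  have hνzero : ∀ k, eta 0 ≤ k → (fun k => conj eta (m + k)) k = 0 := fun k hk =>
    conj_zero eta hetaA (m + k) (by omega)
  have hν0 : conj eta m ≤ n := by
    rw [conj_eq eta Ne hNe m]
    have hsub : (Finset.range Ne).filter (fun i => m < eta i) ⊆ Finset.range n := by
      intro i hi
      simp only [Finset.mem_filter, Finset.mem_range] at hi ⊢
      by_contra h
      have := hetaA (Nat.le_of_not_lt h)
      omega
    simpa using Finset.card_le_card hsub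
  have hχanti : Antitone (fun k => zeta (q + k)) := fun a b hab => hzetaA (by omega)
  have hχzero : ∀ k, Nz ≤ k → (fun k => zeta (q + k)) k = 0 := fun k hk =>
    hNz (q + k) (by omega)
  -- core instances
  have c1 := core (conj eta) (conj_antitone eta Ne hNe) (eta 0) Ne hτzero
    (conj_le eta Ne hNe 0) 0
  have c2 := core (fun k => conj eta (m + k)) hνanti (eta 0) n hνzero
    (by simpa using hν0) m
  have c3 := core (fun k => zeta (q + k)) hχanti Nz p hχzero
    (by simpa using hzetahook) q
  -- reshape c1
  have c1' : ∑ i ∈ Finset.range (eta 0), (conj eta i : ℤ) * ((conj eta i : ℤ) - 2 * (i : ℤ))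
      + ∑ j ∈ Finset.range Ne, (eta j : ℤ) * ((eta j : ℤ) - 2 * ((j : ℤ) + 1)) = 0 := by
    rw [show ∑ i ∈ Finset.range (eta 0), (conj eta i : ℤ) * ((conj eta i : ℤ) - 2 * (i : ℤ))
        = ∑ k ∈ Finset.range (eta 0),
            (conj eta k : ℤ) * ((conj eta k : ℤ) - 2 * (((0:ℕ) : ℤ) + (k : ℤ))) from
      Finset.sum_congr rfl fun k _ => by push_cast; ring]
    rw [show ∑ j ∈ Finset.range Ne, (eta j : ℤ) * ((eta j : ℤ) - 2 * ((j : ℤ) + 1))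
        = ∑ j ∈ Finset.range Ne, (conj (conj eta) j : ℤ) *
            ((conj (conj eta) j : ℤ) + 2 * (((0:ℕ) : ℤ) - ((j : ℤ) + 1))) from
      Finset.sum_congr rfl fun j _ => by
        rw [conj_conj eta hetaA Ne hNe j]; push_cast; ring]
    exact c1
  -- reshape c2
  have c2' : ∑ k ∈ Finset.range (eta 0),
        (conj eta (m + k) : ℤ) * ((conj eta (m + k) : ℤ) - 2 * ((m + k : ℕ) : ℤ))
      + ∑ j ∈ Finset.range n,
          (conj (fun k => conj eta (m + k)) j : ℤ) *
            ((conj (fun k => conj eta (m + k)) j : ℤ) + 2 * ((m : ℤ) - ((j : ℤ) + 1))) = 0 := by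
    rw [show ∑ k ∈ Finset.range (eta 0),
          (conj eta (m + k) : ℤ) * ((conj eta (m + k) : ℤ) - 2 * ((m + k : ℕ) : ℤ))
        = ∑ k ∈ Finset.range (eta 0),
            ((fun k => conj eta (m + k)) k : ℤ) *
              (((fun k => conj eta (m + k)) k : ℤ) - 2 * ((m : ℤ) + (k : ℤ))) from
      Finset.sum_congr rfl fun k _ => by push_cast; ring]
    exact c2
  -- reshape c3
  have c3' : ∑ k ∈ Finset.range Nz,
        (zeta (q + k) : ℤ) * ((zeta (q + k) : ℤ) - 2 * ((q + k : ℕ) : ℤ))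
      + ∑ k ∈ Finset.range p,
          (conj (fun i => zeta (q + i)) k : ℤ) *
            ((conj (fun i => zeta (q + i)) k : ℤ) + 2 * ((q : ℤ) - ((k : ℤ) + 1))) = 0 := by
    rw [show ∑ k ∈ Finset.range Nz,
          (zeta (q + k) : ℤ) * ((zeta (q + k) : ℤ) - 2 * ((q + k : ℕ) : ℤ))
        = ∑ k ∈ Finset.range Nz,
            ((fun k => zeta (q + k)) k : ℤ) *
              (((fun k => zeta (q + k)) k : ℤ) - 2 * ((q : ℤ) + (k : ℤ))) from
      Finset.sum_congr rfl fun k _ => by push_cast; ring]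
    exact c3
  -- finsum to finite sums
  have hf1 : ∑ᶠ i : ℕ, (eta i : ℤ) * ((eta i : ℤ) - 2 * ((i : ℤ) + 1))
      = ∑ i ∈ Finset.range Ne, (eta i : ℤ) * ((eta i : ℤ) - 2 * ((i : ℤ) + 1)) := by
    apply finsum_eq_sum_of_support_subset
    intro i hi
    simp only [Function.mem_support, ne_eq] at hi
    simp only [Finset.coe_range, Set.mem_Iio]
    by_contra h
    exact hi (by rw [hNe i (Nat.le_of_not_lt h)]; simp)
  have hf2 : ∑ᶠ j : ℕ, (zeta j : ℤ) * ((zeta j : ℤ) - 2 * (j : ℤ))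
      = ∑ j ∈ Finset.range (q + Nz), (zeta j : ℤ) * ((zeta j : ℤ) - 2 * (j : ℤ)) := by
    apply finsum_eq_sum_of_support_subset
    intro i hi
    simp only [Function.mem_support, ne_eq] at hi
    simp only [Finset.coe_range, Set.mem_Iio]
    by_contra h
    exact hi (by rw [hNz i (by omega)]; simp)
  -- splitting
  have sτ : ∑ i ∈ Finset.range (m + eta 0),
        (conj eta i : ℤ) * ((conj eta i : ℤ) - 2 * (i : ℤ))
      = ∑ i ∈ Finset.range m, (conj eta i : ℤ) * ((conj eta i : ℤ) - 2 * (i : ℤ))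
        + ∑ k ∈ Finset.range (eta 0),
            (conj eta (m + k) : ℤ) * ((conj eta (m + k) : ℤ) - 2 * ((m + k : ℕ) : ℤ)) :=
    sum_range_add' _ m (eta 0)
  have sζ : ∑ j ∈ Finset.range (q + Nz), (zeta j : ℤ) * ((zeta j : ℤ) - 2 * (j : ℤ))
      = ∑ j ∈ Finset.range q, (zeta j : ℤ) * ((zeta j : ℤ) - 2 * (j : ℤ))
        + ∑ k ∈ Finset.range Nz,
            (zeta (q + k) : ℤ) * ((zeta (q + k) : ℤ) - 2 * ((q + k : ℕ) : ℤ)) :=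
    sum_range_add' _ q Nz
  -- extension of τ-sum
  have eτ : ∑ i ∈ Finset.range (eta 0),
        (conj eta i : ℤ) * ((conj eta i : ℤ) - 2 * (i : ℤ))
      = ∑ i ∈ Finset.range (m + eta 0),
          (conj eta i : ℤ) * ((conj eta i : ℤ) - 2 * (i : ℤ)) := by
    apply Finset.sum_subset (Finset.range_subset_range.mpr (by omega))
    intro x _ hx
    rw [hτzero x (by simpa using hx)]
    simp
  rw [hf1, hf2]
  linarith [c1', c2', c3', sτ, sζ, eτ]
end
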